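/- arXiv:2405.17764 — 2 statements merged into one kernel-verified Lean document; each statement's English description precedes it below -/
import Mathlib

section
/- Let n ≥ 1 be an integer and A ∈ ℝ^{d×d} a positive definite matrix. For every positive definite Σ ∈ ℝ^{d×d}, one has n·log det Σ + tr(Σ⁻¹ A) ≥ n·log det(n⁻¹A) + n·d, with equality if and only if Σ = n⁻¹ A. -/
open Matrix

private lemma real_log_ineq {c x : ℝ} (hc : 0 < c) (hx : 0 < x) :
    c - c * Real.log c ≤ x - c * Real.log x ∧
      (x - c * Real.log x = c - c * Real.log c ↔ x = c) := by
  have hxc : 0 < x / c := div_pos hx hc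
  have hlog : Real.log (x / c) = Real.log x - Real.log c := Real.log_div hx.ne' hc.ne'
  have h1 : Real.log (x / c) ≤ x / c - 1 := Real.log_le_sub_one_of_pos hxc
  have hmain : c - c * Real.log c ≤ x - c * Real.log x := by
    have := mul_le_mul_of_nonneg_left h1 hc.le
    rw [hlog] at this
    have h2 : c * (x / c - 1) = x - c := by field_simp
    nlinarith
  refine ⟨hmain, ⟨fun h => ?_, fun h => by rw [h]⟩⟩
  by_contra hne
  have hne1 : x / c ≠ 1 := by
    intro h1'
    exact hne (by field_simp at h1'; linarith)
  have h1' : Real.log (x / c) < x / c - 1 := Real.log_lt_sub_one_of_pos hxc hne1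
  have := mul_lt_mul_of_pos_left h1' hc
  rw [hlog] at this
  have h2 : c * (x / c - 1) = x - c := by field_simp
  nlinarith

private lemma posdef_conj {d : ℕ} {B R : Matrix (Fin d) (Fin d) ℝ} (hB : B.PosDef)
    (hR : R.IsHermitian) (hRdet : IsUnit R.det) : (R * B * R).PosDef := by
  refine PosDef.of_dotProduct_mulVec_pos ?_ ?_
  · show (R * B * R)ᴴ = R * B * R
    rw [conjTranspose_mul, conjTranspose_mul, hR.eq, hB.1.eq, mul_assoc]
  · intro x hx
    have hy : R *ᵥ x ≠ 0 := by
      intro h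
      apply hx
      have : R⁻¹ *ᵥ (R *ᵥ x) = x := by
        rw [mulVec_mulVec, nonsing_inv_mul _ hRdet, one_mulVec]
      rw [h, mulVec_zero] at this
      exact this.symm
    have key : star x ⬝ᵥ ((R * B * R) *ᵥ x) = star (R *ᵥ x) ⬝ᵥ (B *ᵥ (R *ᵥ x)) := by
      rw [star_mulVec, hR.eq, dotProduct_mulVec, dotProduct_mulVec, dotProduct_mulVec,
        vecMul_vecMul, vecMul_vecMul, mul_assoc]
    rw [key]
    exact hB.dotProduct_mulVec_pos hy

/-- For `n ≥ 1` and positive definite `A ∈ ℝ^{d×d}`, every positive definite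
`Σ ∈ ℝ^{d×d}` satisfies `n·log det Σ + tr(Σ⁻¹ A) ≥ n·log det(n⁻¹A) + n·d`, with equality
if and only if `Σ = n⁻¹ A`. -/
theorem key_inequality {n d : ℕ} (hn : 1 ≤ n)
    (A : Matrix (Fin d) (Fin d) ℝ) (hA : A.PosDef) :
    ∀ Sig : Matrix (Fin d) (Fin d) ℝ, Sig.PosDef →
      (n : ℝ) * Real.log ((n : ℝ)⁻¹ • A).det + (n : ℝ) * (d : ℝ) ≤
        (n : ℝ) * Real.log Sig.det + Matrix.trace (Sig⁻¹ * A) ∧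
      ((n : ℝ) * Real.log Sig.det + Matrix.trace (Sig⁻¹ * A) =
          (n : ℝ) * Real.log ((n : ℝ)⁻¹ • A).det + (n : ℝ) * (d : ℝ) ↔
        Sig = (n : ℝ)⁻¹ • A) := by
  intro Sig hSig
  classical
  have hn2 : (0:ℝ) < (n:ℝ) := by exact_mod_cast Nat.cast_pos.mpr hn
  open MatrixOrder in set R := CFC.sqrt A with hRdef
  open MatrixOrder in have hRsemi : R.PosSemidef := nonneg_iff_posSemidef.mp (CFC.sqrt_nonneg A)
  have hRherm : R.IsHermitian := hRsemi.1
  open MatrixOrder in have hRR : R * R = A := CFC.sqrt_mul_sqrt_self A hA.posSemidef.nonneg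
  have hAdet : (0:ℝ) < A.det := hA.det_pos
  have hRdet : IsUnit R.det := by
    have h : R.det * R.det = A.det := by rw [← det_mul, hRR]
    refine isUnit_iff_ne_zero.2 fun h0 => ?_
    rw [h0, zero_mul] at h
    exact hAdet.ne h
  have hSinv : (Sig⁻¹).PosDef := hSig.inv
  set S := R * Sig⁻¹ * R with hSdef
  have hS : S.PosDef := posdef_conj hSinv hRherm hRdet
  set μ := hS.1.eigenvalues with hμdef
  have hμpos : ∀ i, 0 < μ i := hS.eigenvalues_pos
  -- trace identity
  have htr : Matrix.trace (Sig⁻¹ * A) = Matrix.trace S := by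
    rw [hSdef, trace_mul_cycle, hRR, trace_mul_comm]
  have htrS : Matrix.trace S = ∑ i, μ i := by
    conv_lhs => rw [hS.1.spectral_theorem]
    rw [Unitary.conjStarAlgAut_apply, trace_mul_cycle, (Unitary.mem_iff.mp hS.1.eigenvectorUnitary.2).1, one_mul,
      trace_diagonal]
    rfl
  -- determinant identities
  have hSigdet : (0:ℝ) < Sig.det := hSig.det_pos
  have hSdet : S.det = A.det / Sig.det := by
    rw [hSdef, det_mul, det_mul, det_nonsing_inv, Ring.inverse_eq_inv', ← hRR, det_mul]
    field_simp
  have hSdetpos : (0:ℝ) < S.det := hS.det_pos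
  have hlogSdet : Real.log S.det = ∑ i, Real.log (μ i) := by
    have : S.det = ∏ i, μ i := by
      have h := hS.1.det_eq_prod_eigenvalues
      simpa using h
    rw [this, Real.log_prod (fun i _ => (hμpos i).ne')]
  have hlogSig : Real.log Sig.det = Real.log A.det - Real.log S.det := by
    rw [hSdet, Real.log_div hAdet.ne' hSigdet.ne']
    ring
  have hlogscaled : Real.log ((n:ℝ)⁻¹ • A).det
      = -(d * Real.log (n:ℝ)) + Real.log A.det := by
    rw [det_smul, Fintype.card_fin, Real.log_mul (by positivity) hAdet.ne',
      Real.log_pow, Real.log_inv]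
    ring
  -- the sum inequality
  have hterm : ∀ i, (n:ℝ) - (n:ℝ) * Real.log (n:ℝ) ≤ μ i - (n:ℝ) * Real.log (μ i) :=
    fun i => (real_log_ineq hn2 (hμpos i)).1
  have hsum : (d:ℝ) * ((n:ℝ) - (n:ℝ) * Real.log (n:ℝ))
      ≤ ∑ i, (μ i - (n:ℝ) * Real.log (μ i)) := by
    calc (d:ℝ) * ((n:ℝ) - (n:ℝ) * Real.log (n:ℝ))
        = ∑ _i : Fin d, ((n:ℝ) - (n:ℝ) * Real.log (n:ℝ)) := by
          rw [Finset.sum_const, Finset.card_univ, Fintype.card_fin, nsmul_eq_mul]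
      _ ≤ ∑ i, (μ i - (n:ℝ) * Real.log (μ i)) := Finset.sum_le_sum fun i _ => hterm i
  have hsplit : ∑ i, (μ i - (n:ℝ) * Real.log (μ i))
      = (∑ i, μ i) - (n:ℝ) * ∑ i, Real.log (μ i) := by
    rw [Finset.sum_sub_distrib, Finset.mul_sum]
  -- main rewriting of both sides
  have hLHS : (n:ℝ) * Real.log ((n:ℝ)⁻¹ • A).det + (n:ℝ) * (d:ℝ)
      = (n:ℝ) * Real.log A.det - (n:ℝ) * (d:ℝ) * Real.log (n:ℝ) + (n:ℝ) * (d:ℝ) := by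
    rw [hlogscaled]; ring
  have hRHS : (n:ℝ) * Real.log Sig.det + Matrix.trace (Sig⁻¹ * A)
      = (n:ℝ) * Real.log A.det - (n:ℝ) * ∑ i, Real.log (μ i) + ∑ i, μ i := by
    rw [htr, htrS, hlogSig, hlogSdet]; ring
  constructor
  · rw [hLHS, hRHS]
    have := hsum
    rw [hsplit] at this
    nlinarith [this]
  · constructor
    · intro heq
      -- equality forces all eigenvalues equal to n
      have hzero : ∑ i, ((μ i - (n:ℝ) * Real.log (μ i)) - ((n:ℝ) - (n:ℝ) * Real.log (n:ℝ))) = 0 := by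
        rw [Finset.sum_sub_distrib, hsplit]
        rw [hLHS, hRHS] at heq
        have hconst : ∑ _i : Fin d, ((n:ℝ) - (n:ℝ) * Real.log (n:ℝ))
            = (d:ℝ) * ((n:ℝ) - (n:ℝ) * Real.log (n:ℝ)) := by
          rw [Finset.sum_const, Finset.card_univ, Fintype.card_fin, nsmul_eq_mul]
        rw [hconst]
        nlinarith [heq]
      have hall : ∀ i ∈ Finset.univ, (μ i - (n:ℝ) * Real.log (μ i)) - ((n:ℝ) - (n:ℝ) * Real.log (n:ℝ)) = 0 := by
        rw [← Finset.sum_eq_zero_iff_of_nonneg (fun i _ => sub_nonneg.2 (hterm i))]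
        exact hzero
      have hμeq : ∀ i, μ i = (n:ℝ) := by
        intro i
        have h := sub_eq_zero.1 (hall i (Finset.mem_univ i))
        exact (real_log_ineq hn2 (hμpos i)).2.1 h
      -- hence S = n • 1
      have hSid : S = (n:ℝ) • (1 : Matrix (Fin d) (Fin d) ℝ) := by
        have hfun : (RCLike.ofReal ∘ μ : Fin d → ℝ) = fun _ => (n:ℝ) := by
          funext i; simp [hμeq i]
        have hdiag : Matrix.diagonal (RCLike.ofReal ∘ μ) = (n:ℝ) • (1 : Matrix (Fin d) (Fin d) ℝ) := by
          rw [hfun, ← smul_one_eq_diagonal]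
        conv_lhs => rw [hS.1.spectral_theorem]
        rw [Unitary.conjStarAlgAut_apply, hdiag, Matrix.mul_smul, Matrix.smul_mul, mul_one,
          (Unitary.mem_iff.mp hS.1.eigenvectorUnitary.2).2]
      -- hence Sig⁻¹ = n • A⁻¹
      have hSiginv : Sig⁻¹ = (n:ℝ) • A⁻¹ := by
        have h1 : R⁻¹ * S * R⁻¹ = Sig⁻¹ := by
          rw [hSdef, mul_assoc, mul_assoc, mul_nonsing_inv _ hRdet, mul_one, ← mul_assoc,
            nonsing_inv_mul _ hRdet, one_mul]
        rw [← h1, hSid, Matrix.mul_smul, Matrix.smul_mul, mul_one, ← Matrix.mul_inv_rev, hRR]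
      have hfinal : ((n:ℝ)⁻¹ • A) * Sig⁻¹ = 1 := by
        rw [hSiginv, Matrix.smul_mul, Matrix.mul_smul, smul_smul,
          mul_nonsing_inv _ (isUnit_iff_ne_zero.2 hAdet.ne'), inv_mul_cancel₀ hn2.ne', one_smul]
      have := Matrix.inv_eq_left_inv hfinal
      rw [nonsing_inv_nonsing_inv _ (isUnit_iff_ne_zero.2 hSigdet.ne')] at this
      exact this
    · intro h
      subst h
      have hSiginv : ((n:ℝ)⁻¹ • A)⁻¹ = (n:ℝ) • A⁻¹ := by
        apply Matrix.inv_eq_left_inv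
        rw [Matrix.smul_mul, Matrix.mul_smul, smul_smul, nonsing_inv_mul _ (isUnit_iff_ne_zero.2 hAdet.ne'),
          mul_inv_cancel₀ hn2.ne', one_smul]
      rw [hSiginv, Matrix.smul_mul, nonsing_inv_mul _ (isUnit_iff_ne_zero.2 hAdet.ne'), trace_smul, trace_one]
      simp [Fintype.card_fin]
end

section
/- Let T ≥ 2 and d ≥ 1, let Σ_T ∈ ℝ^{(T−1)×(T−1)} be the matrix with entries [Σ_T]_{s,t} = min(s,t)·(T − max(s,t))/T, assumed positive definite, and let Σ ∈ ℝ^{d×d} be positive definite. If the random matrix X ∈ ℝ^{d×(T−1)} satisfies vec(X) ~ N(0, Σ_T ⊗ Σ), then the real random variable tr(Σ⁻¹ X Σ_T⁻¹ Xᵀ) follows the chi-square distribution with (T−1)·d degrees of freedom, i.e., the Gamma distribution with shape (T−1)·d/2 and rate 1/2. -/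
set_option linter.unusedSectionVars false
set_option linter.unusedVariables false
set_option maxHeartbeats 1000000

open MeasureTheory ProbabilityTheory Matrix
open scoped Kronecker

/-- The density of the centered multivariate Gaussian measure `N(0, C)` on `ι → ℝ`. -/
noncomputable def gaussianPdf {ι : Type*} [Fintype ι] [DecidableEq ι]
    (C : Matrix ι ι ℝ) (x : ι → ℝ) : ℝ :=
  (Real.sqrt ((2 * Real.pi) ^ (Fintype.card ι) * C.det))⁻¹ *
    Real.exp (-(x ⬝ᵥ C⁻¹.mulVec x) / 2)

/-- The centered multivariate Gaussian measure `N(0, C)` on `ι → ℝ`, given by its density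
with respect to Lebesgue measure. -/
noncomputable def multivariateGaussian {ι : Type*} [Fintype ι] [DecidableEq ι]
    (C : Matrix ι ι ℝ) : Measure (ι → ℝ) :=
  volume.withDensity fun x => ENNReal.ofReal (gaussianPdf C x)

/-- The covariance matrix `Σ_T` of the standard Brownian bridge on `[0,T]` sampled at times
`1, …, T-1`: its `(s,t)` entry is `min(s,t)·(T − max(s,t))/T` (indices shifted by one). -/
noncomputable def bridgeCov (T : ℕ) : Matrix (Fin (T - 1)) (Fin (T - 1)) ℝ :=
  Matrix.of fun s t =>
    ((min (s.1 + 1) (t.1 + 1) : ℕ) : ℝ) * ((T : ℝ) - ((max (s.1 + 1) (t.1 + 1) : ℕ) : ℝ)) / T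

/-- Column-stacking vectorization of a `d × m` matrix, indexed by (column, row) pairs. -/
def vec {d m : ℕ} (X : Matrix (Fin d) (Fin m) ℝ) : Fin m × Fin d → ℝ :=
  fun p => X p.2 p.1

/- ================= Auxiliary lemmas ================= -/

section Aux

open Set Real

variable {ι : Type*} [Fintype ι] [DecidableEq ι]

lemma measurable_mulVec (M : Matrix ι ι ℝ) : Measurable fun v : ι → ℝ => M.mulVec v :=
  measurable_pi_lambda _ fun i => Finset.measurable_sum _ fun j _ =>
    (measurable_pi_apply j).const_mul _

lemma measurable_dot (M : Matrix ι ι ℝ) :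
    Measurable fun x : ι → ℝ => x ⬝ᵥ M.mulVec x := by
  apply Finset.measurable_sum
  intro i _
  exact (measurable_pi_apply i).mul ((measurable_pi_apply i).comp (measurable_mulVec M))

lemma measurable_dot_self :
    Measurable fun x : ι → ℝ => x ⬝ᵥ x := by
  apply Finset.measurable_sum
  intro i _
  exact (measurable_pi_apply i).mul (measurable_pi_apply i)

lemma measurable_gaussianPdf (C : Matrix ι ι ℝ) : Measurable (gaussianPdf C) := by
  unfold gaussianPdf
  exact (((measurable_dot C⁻¹).neg.div_const 2).exp).const_mul _

lemma dotProduct_self_nonneg (x : ι → ℝ) : 0 ≤ x ⬝ᵥ x :=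
  Finset.sum_nonneg fun i _ => mul_self_nonneg _

lemma gaussianPdf_one (x : ι → ℝ) :
    gaussianPdf (1 : Matrix ι ι ℝ) x =
      (Real.sqrt ((2 * π) ^ (Fintype.card ι)))⁻¹ * Real.exp (-(x ⬝ᵥ x) / 2) := by
  simp [gaussianPdf]

lemma gaussianPdf_pos {C : Matrix ι ι ℝ} (hC : 0 < C.det) (x : ι → ℝ) :
    0 < gaussianPdf C x := by
  unfold gaussianPdf
  have h2π : (0:ℝ) < (2 * π) ^ (Fintype.card ι) := by positivity
  positivity

/-- The multivariate Gaussian measure is nonzero when the covariance determinant is positive. -/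
lemma multivariateGaussian_ne_zero {C : Matrix ι ι ℝ} (hC : 0 < C.det) :
    _root_.multivariateGaussian C ≠ 0 := by
  intro h
  have h1 : _root_.multivariateGaussian C Set.univ = 0 := by rw [h]; simp
  rw [_root_.multivariateGaussian, withDensity_apply _ MeasurableSet.univ,
    Measure.restrict_univ] at h1
  have h2 : 0 < ∫⁻ x, ENNReal.ofReal (gaussianPdf C x) := by
    rw [lintegral_pos_iff_support (by
      exact ENNReal.measurable_ofReal.comp (measurable_gaussianPdf C))]
    have : (Function.support fun x => ENNReal.ofReal (gaussianPdf C x)) = Set.univ := by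
      ext x
      simp only [Function.mem_support, Set.mem_univ, iff_true]
      simp [ENNReal.ofReal_eq_zero, not_le, gaussianPdf_pos hC x]
    rw [this]
    simp [Measure.measure_univ_pos.mpr]
    intro h0
    exact (MeasureTheory.Measure.measure_univ_ne_zero.mpr (by
      simpa using (NeZero.ne (volume : Measure (ι → ℝ))))) (by simp [h0])
  rw [h1] at h2
  exact lt_irrefl 0 h2

/-- Change of variables: the Gaussian with covariance `S * S` is the pushforward of the
standard Gaussian under `S.mulVec`. -/
lemma multivariateGaussian_sq_eq_map (S : Matrix ι ι ℝ) (hS : Sᵀ = S) (hdet : S.det ≠ 0) :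
    _root_.multivariateGaussian (S * S) = (_root_.multivariateGaussian 1).map (S.mulVec) := by
  have hSinv : (S⁻¹)ᵀ = S⁻¹ := by rw [Matrix.transpose_nonsing_inv, hS]
  have hkey : ∀ x : ι → ℝ, S⁻¹.mulVec (S.mulVec x) = x := by
    intro x
    rw [Matrix.mulVec_mulVec, Matrix.nonsing_inv_mul S (isUnit_iff_ne_zero.mpr hdet), Matrix.one_mulVec]
  have hquad : ∀ x : ι → ℝ, (S.mulVec x) ⬝ᵥ (S * S)⁻¹.mulVec (S.mulVec x) = x ⬝ᵥ x := by
    intro x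
    rw [Matrix.mul_inv_rev, ← Matrix.mulVec_mulVec, Matrix.dotProduct_mulVec,
      ← Matrix.mulVec_transpose, hSinv, hkey]
  have hpdf : ∀ x : ι → ℝ,
      gaussianPdf (1 : Matrix ι ι ℝ) x = |S.det| * gaussianPdf (S * S) (S.mulVec x) := by
    intro x
    rw [gaussianPdf_one]
    unfold gaussianPdf
    rw [hquad, Matrix.det_mul]
    have h1 : Real.sqrt ((2 * π) ^ (Fintype.card ι) * (S.det * S.det)) =
        Real.sqrt ((2 * π) ^ (Fintype.card ι)) * |S.det| := by
      rw [Real.sqrt_mul (by positivity), Real.sqrt_mul_self_eq_abs]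
    rw [h1, mul_inv]
    have habs : |S.det| ≠ 0 := abs_ne_zero.mpr hdet
    field_simp
  ext s hs
  rw [Measure.map_apply (measurable_mulVec S) hs, _root_.multivariateGaussian, _root_.multivariateGaussian,
    withDensity_apply _ hs, withDensity_apply _ ((measurable_mulVec S) hs)]
  have hmapvol : Measure.map (S.mulVec) volume = ENNReal.ofReal |S.det⁻¹| • volume := by
    have h := Real.map_matrix_volume_pi_eq_smul_volume_pi hdet
    have hco : ⇑(Matrix.toLin' S) = S.mulVec := funext fun v => Matrix.toLin'_apply S v
    rwa [hco] at h
  have hmeas : Measurable fun y : ι → ℝ => ENNReal.ofReal (|S.det| * gaussianPdf (S * S) y) :=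
    ENNReal.measurable_ofReal.comp ((measurable_gaussianPdf _).const_mul _)
  refine Eq.symm ?_
  calc ∫⁻ x in S.mulVec ⁻¹' s, ENNReal.ofReal (gaussianPdf (1 : Matrix ι ι ℝ) x)
      = ∫⁻ x in S.mulVec ⁻¹' s,
          ENNReal.ofReal (|S.det| * gaussianPdf (S * S) (S.mulVec x)) := by
        apply lintegral_congr; intro x; rw [hpdf]
    _ = ∫⁻ y in s, ENNReal.ofReal (|S.det| * gaussianPdf (S * S) y)
          ∂(Measure.map (S.mulVec) volume) := by
        rw [setLIntegral_map hs hmeas (measurable_mulVec S)]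
    _ = ENNReal.ofReal |S.det⁻¹| *
          ∫⁻ y in s, ENNReal.ofReal (|S.det| * gaussianPdf (S * S) y) := by
        rw [hmapvol, Measure.restrict_smul, lintegral_smul_measure, smul_eq_mul]
    _ = ∫⁻ y in s, ENNReal.ofReal (gaussianPdf (S * S) y) := by
        rw [← lintegral_const_mul _ hmeas]
        apply lintegral_congr
        intro y
        rw [← ENNReal.ofReal_mul (by positivity)]
        congr 1
        rw [abs_inv]
        have habs : |S.det| ≠ 0 := abs_ne_zero.mpr hdet
        field_simp
  done

/-- The quadratic form of a Gaussian with covariance `S*S` pushes forward to the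
standard squared norm. -/
lemma multivariateGaussian_map_quadForm (S : Matrix ι ι ℝ) (hS : Sᵀ = S) (hdet : S.det ≠ 0) :
    (_root_.multivariateGaussian (S * S)).map (fun x => x ⬝ᵥ (S * S)⁻¹.mulVec x)
      = (_root_.multivariateGaussian 1).map (fun x : ι → ℝ => x ⬝ᵥ x) := by
  have hSinv : (S⁻¹)ᵀ = S⁻¹ := by rw [Matrix.transpose_nonsing_inv, hS]
  have hkey : ∀ x : ι → ℝ, S⁻¹.mulVec (S.mulVec x) = x := by
    intro x
    rw [Matrix.mulVec_mulVec, Matrix.nonsing_inv_mul S (isUnit_iff_ne_zero.mpr hdet), Matrix.one_mulVec]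
  have hquad : ∀ x : ι → ℝ, (S.mulVec x) ⬝ᵥ (S * S)⁻¹.mulVec (S.mulVec x) = x ⬝ᵥ x := by
    intro x
    rw [Matrix.mul_inv_rev, ← Matrix.mulVec_mulVec, Matrix.dotProduct_mulVec,
      ← Matrix.mulVec_transpose, hSinv, hkey]
  rw [multivariateGaussian_sq_eq_map S hS hdet,
    Measure.map_map (measurable_dot _) (measurable_mulVec S)]
  congr 1
  funext x
  exact hquad x

end Aux

/- ================= The analytic core ================= -/

section Core

open Set Real

lemma isHermitian_real_transpose_eq {κ : Type*} {M : Matrix κ κ ℝ}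
    (h : M.IsHermitian) : Mᵀ = M := by
  ext i j
  have h1 := congrFun (congrFun h i) j
  simpa [Matrix.conjTranspose_apply] using h1

lemma sqrt_pow_aux {x : ℝ} (hx : 0 ≤ x) (n : ℕ) :
    Real.sqrt (x ^ n) = Real.sqrt x ^ n := by
  rw [← Real.sqrt_sq (by positivity : (0:ℝ) ≤ Real.sqrt x ^ n)]
  congr 1
  rw [← pow_mul, mul_comm, pow_mul, Real.sq_sqrt hx]

/-- Equality of constants for the chi-square density computation. -/
lemma chiSq_const_eq {n : ℕ} (hn : 1 ≤ n) :
    2 * ((1/2 : ℝ) ^ ((n : ℝ)/2) / Real.Gamma ((n : ℝ)/2)) =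
      (n : ℝ) * (Real.sqrt π ^ n / Real.Gamma ((n : ℝ)/2 + 1)) *
        (Real.sqrt ((2 * π) ^ n))⁻¹ := by
  have hn0 : (0:ℝ) < n := by exact_mod_cast hn
  have hΓ : 0 < Real.Gamma ((n : ℝ)/2) := Real.Gamma_pos_of_pos (by positivity)
  have hG1 : Real.Gamma ((n : ℝ)/2 + 1) = ((n : ℝ)/2) * Real.Gamma ((n : ℝ)/2) :=
    Real.Gamma_add_one (by positivity)
  have hsq : Real.sqrt ((2 * π) ^ n) = Real.sqrt (2 * π) ^ n :=
    sqrt_pow_aux (by positivity) n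
  have hhalf : (1/2 : ℝ) ^ ((n : ℝ)/2) = Real.sqrt (1/2) ^ n := by
    rw [Real.sqrt_eq_rpow, ← Real.rpow_natCast ((1/2 : ℝ) ^ ((1:ℝ)/2 : ℝ)) n,
      ← Real.rpow_mul (by norm_num : (0:ℝ) ≤ 1/2)]
    congr 1
    ring
  have hkey : Real.sqrt (1/2) * Real.sqrt (2 * π) = Real.sqrt π := by
    rw [← Real.sqrt_mul (by norm_num)]
    norm_num
  have hkey2 : Real.sqrt (1/2) ^ n * Real.sqrt (2 * π) ^ n = Real.sqrt π ^ n := by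
    rw [← mul_pow, hkey]
  have hs2π : (0:ℝ) < Real.sqrt (2 * π) ^ n := by
    apply pow_pos
    exact Real.sqrt_pos.mpr (by positivity)
  rw [hG1, hsq, hhalf, ← hkey2]
  have hB : Real.sqrt (2*π) ^ n ≠ 0 := ne_of_gt hs2π
  have hGne : Real.Gamma ((n:ℝ)/2) ≠ 0 := ne_of_gt hΓ
  have hnne : (n:ℝ) ≠ 0 := ne_of_gt hn0
  field_simp

/-- The substitution `s = r ^ 2` identity for the chi-square density. -/
lemma chiSq_integral_eq {n : ℕ} (hn : 1 ≤ n) {t : ℝ} (ht : 0 ≤ t) :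
    ∫ s in Ioc 0 t, gammaPDFReal ((n : ℝ)/2) (1/2) s
      = (n : ℝ) * (Real.sqrt π ^ n / Real.Gamma ((n : ℝ)/2 + 1)) *
          ∫ r in Ioc 0 (Real.sqrt t),
            r ^ (n - 1) * ((Real.sqrt ((2 * π) ^ n))⁻¹ * Real.exp (-(r ^ 2) / 2)) := by
  have himg : (fun r : ℝ => r ^ 2) '' Ioo 0 (Real.sqrt t) = Ioo 0 t := by
    ext s
    constructor
    · rintro ⟨r, ⟨hr0, hrt⟩, rfl⟩
      refine ⟨by positivity, ?_⟩
      have := mul_self_lt_mul_self (le_of_lt hr0) hrt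
      calc r ^ 2 = r * r := sq r
        _ < Real.sqrt t * Real.sqrt t := this
        _ = t := Real.mul_self_sqrt ht
    · rintro ⟨hs0, hst⟩
      refine ⟨Real.sqrt s, ⟨Real.sqrt_pos.mpr hs0, ?_⟩, Real.sq_sqrt hs0.le⟩
      exact Real.sqrt_lt_sqrt hs0.le hst
  have hderiv : ∀ r ∈ Ioo (0:ℝ) (Real.sqrt t),
      HasDerivWithinAt (fun r : ℝ => r ^ 2) (2 * r) (Ioo 0 (Real.sqrt t)) r := by
    intro r _
    simpa using (hasDerivAt_pow 2 r).hasDerivWithinAt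
  have hinj : InjOn (fun r : ℝ => r ^ 2) (Ioo 0 (Real.sqrt t)) := by
    intro a ha b hb h
    simp only at h
    nlinarith [ha.1, hb.1]
  rw [MeasureTheory.integral_Ioc_eq_integral_Ioo, ← himg,
    integral_image_eq_integral_abs_deriv_smul measurableSet_Ioo hderiv hinj]
  rw [show (∫ r in Ioc 0 (Real.sqrt t),
      r ^ (n - 1) * ((Real.sqrt ((2 * π) ^ n))⁻¹ * Real.exp (-(r ^ 2) / 2)))
    = ∫ r in Ioo 0 (Real.sqrt t),
      r ^ (n - 1) * ((Real.sqrt ((2 * π) ^ n))⁻¹ * Real.exp (-(r ^ 2) / 2))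
    from MeasureTheory.integral_Ioc_eq_integral_Ioo, ← integral_const_mul]
  apply setIntegral_congr_fun measurableSet_Ioo
  intro r hr
  have hr0 : 0 < r := hr.1
  -- pointwise identity
  simp only [smul_eq_mul]
  have habs : |2 * r| = 2 * r := abs_of_pos (by linarith)
  rw [habs]
  rw [ProbabilityTheory.gammaPDFReal, if_pos (by positivity : (0:ℝ) ≤ r ^ 2)]
  have hrpow : (r ^ 2 : ℝ) ^ ((n : ℝ)/2 - 1) = r ^ ((n : ℝ) - 2) := by
    rw [← Real.rpow_natCast r 2, ← Real.rpow_mul hr0.le]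
    norm_num
    ring_nf
  have hpow2 : r * r ^ ((n : ℝ) - 2) = r ^ (n - 1 : ℕ) := by
    have h1 : r ^ ((1:ℝ) + ((n:ℝ) - 2)) = r ^ (1:ℝ) * r ^ ((n:ℝ) - 2) := Real.rpow_add hr0 1 _
    rw [Real.rpow_one] at h1
    rw [← h1, ← Real.rpow_natCast r (n - 1)]
    congr 1
    push_cast [Nat.cast_sub hn]
    ring
  have hconst := chiSq_const_eq hn
  rw [hrpow]
  have hexp : Real.exp (-(1/2 * r ^ 2)) = Real.exp (-(r ^ 2) / 2) := by
    congr 1; ring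
  rw [hexp]
  calc 2 * r * ((1/2 : ℝ) ^ ((n : ℝ)/2) / Real.Gamma ((n : ℝ)/2) * r ^ ((n : ℝ) - 2) *
        Real.exp (-(r ^ 2) / 2))
      = (2 * ((1/2 : ℝ) ^ ((n : ℝ)/2) / Real.Gamma ((n : ℝ)/2))) *
          ((r * r ^ ((n : ℝ) - 2)) * Real.exp (-(r ^ 2) / 2)) := by ring
    _ = ((n : ℝ) * (Real.sqrt π ^ n / Real.Gamma ((n : ℝ)/2 + 1)) *
          (Real.sqrt ((2 * π) ^ n))⁻¹) *
          (r ^ (n - 1 : ℕ) * Real.exp (-(r ^ 2) / 2)) := by rw [hconst, hpow2]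
    _ = (n : ℝ) * (Real.sqrt π ^ n / Real.Gamma ((n : ℝ)/2 + 1)) *
          (r ^ (n - 1 : ℕ) * ((Real.sqrt ((2 * π) ^ n))⁻¹ * Real.exp (-(r ^ 2) / 2))) := by
        ring

end Core

/- ================= The main distributional lemma ================= -/

section Main

open Set Real

variable {ι : Type*} [Fintype ι] [DecidableEq ι] [Nonempty ι]

/-- The squared norm of a standard Gaussian vector is chi-square distributed. -/
lemma multivariateGaussian_one_map_dot_self :
    (_root_.multivariateGaussian (1 : Matrix ι ι ℝ)).map (fun x : ι → ℝ => x ⬝ᵥ x)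
      = gammaMeasure ((Fintype.card ι : ℝ)/2) (1/2) := by
  set n := Fintype.card ι with hn_def
  have hn : 1 ≤ n := Fintype.card_pos
  have hn0 : (0:ℝ) < n := by exact_mod_cast hn
  haveI : IsProbabilityMeasure (gammaMeasure ((n : ℝ)/2) (1/2)) :=
    isProbabilityMeasure_gammaMeasure (by positivity) (by norm_num)
  refine (Measure.ext_of_Iic (gammaMeasure ((n : ℝ)/2) (1/2)) _ fun t => ?_).symm
  have hAmeas : MeasurableSet {x : ι → ℝ | x ⬝ᵥ x ≤ t} :=
    measurableSet_le measurable_dot_self measurable_const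
  rw [Measure.map_apply measurable_dot_self measurableSet_Iic]
  have hpre : (fun x : ι → ℝ => x ⬝ᵥ x) ⁻¹' Iic t = {x : ι → ℝ | x ⬝ᵥ x ≤ t} := rfl
  rw [hpre]
  rcases lt_or_ge t 0 with ht | ht
  · -- negative t : both sides vanish
    have hempty : {x : ι → ℝ | x ⬝ᵥ x ≤ t} = ∅ := by
      ext x
      simp only [mem_setOf_eq, mem_empty_iff_false, iff_false, not_le]
      exact lt_of_lt_of_le ht (dotProduct_self_nonneg x)
    rw [hempty, measure_empty, gammaMeasure, withDensity_apply _ measurableSet_Iic]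
    rw [setLIntegral_congr_fun measurableSet_Iic
      (fun x (hx : x ≤ t) => gammaPDF_of_neg (lt_of_le_of_lt hx ht))]
    simp
  · -- main case
    -- notation
    set c : ℝ := (Real.sqrt ((2 * π) ^ n))⁻¹ with hc_def
    -- integrability of the standard Gaussian density
    have hfun : gaussianPdf (1 : Matrix ι ι ℝ) =
        fun x => c * ∏ i, Real.exp (-(1/2) * (x i)^2) := by
      funext x
      rw [gaussianPdf_one, ← Real.exp_sum]
      congr 1
      rw [dotProduct, neg_div, Finset.sum_div, ← Finset.sum_neg_distrib]
      congr 1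
      exact Finset.sum_congr rfl fun i _ => by ring
    have hint : Integrable (gaussianPdf (1 : Matrix ι ι ℝ)) := by
      rw [hfun]
      exact (MeasureTheory.Integrable.fintype_prod
        (f := fun (_ : ι) (x : ℝ) => Real.exp (-(1/2) * x^2))
        (fun _ => integrable_exp_neg_mul_sq (by norm_num))).const_mul _
    -- left-hand side as a Bochner integral
    rw [_root_.multivariateGaussian, withDensity_apply _ hAmeas,
      ← ofReal_integral_eq_lintegral_ofReal hint.integrableOn
        (ae_of_all _ fun x => (gaussianPdf_pos (by simp) x).le)]
    -- transfer to Euclidean space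
    have hvp := EuclideanSpace.volume_preserving_symm_measurableEquiv_toLp ι
    set e := (MeasurableEquiv.toLp 2 (ι → ℝ)).symm with he_def
    have hez : ∀ z : EuclideanSpace ℝ ι, (e z) ⬝ᵥ (e z) = ‖z‖^2 := by
      intro z
      rw [EuclideanSpace.norm_eq, Real.sq_sqrt (Finset.sum_nonneg fun i _ => sq_nonneg _)]
      simp [dotProduct, pow_two]
      rfl
    have hgz : ∀ z : EuclideanSpace ℝ ι,
        gaussianPdf (1 : Matrix ι ι ℝ) (e z) = c * Real.exp (-(‖z‖^2) / 2) := by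
      intro z
      rw [gaussianPdf_one, hez]
    have hpreB : e ⁻¹' {x : ι → ℝ | x ⬝ᵥ x ≤ t} =
        Metric.closedBall (0 : EuclideanSpace ℝ ι) (Real.sqrt t) := by
      ext z
      simp only [Set.mem_preimage, Set.mem_setOf_eq, Metric.mem_closedBall, dist_zero_right]
      rw [hez]
      exact (Real.le_sqrt (norm_nonneg z) ht).symm
    have hset : ∫ x in {x : ι → ℝ | x ⬝ᵥ x ≤ t}, gaussianPdf (1 : Matrix ι ι ℝ) x
        = ∫ z in Metric.closedBall (0 : EuclideanSpace ℝ ι) (Real.sqrt t),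
            gaussianPdf (1 : Matrix ι ι ℝ) (e z) := by
      rw [← hpreB]
      exact (hvp.setIntegral_preimage_emb e.measurableEmbedding _ _).symm
    -- polar coordinates
    set F : ℝ → ℝ := (Iic (Real.sqrt t)).indicator (fun r => c * Real.exp (-(r^2) / 2))
      with hF_def
    have hFz : ∀ z : EuclideanSpace ℝ ι,
        (Metric.closedBall (0 : EuclideanSpace ℝ ι) (Real.sqrt t)).indicator
          (fun z => gaussianPdf (1 : Matrix ι ι ℝ) (e z)) z = F ‖z‖ := by
      intro z
      by_cases hz : ‖z‖ ≤ Real.sqrt t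
      · rw [Set.indicator_of_mem (by simpa [Metric.mem_closedBall, dist_zero_right] using hz),
          hF_def, Set.indicator_of_mem (by simpa using hz), hgz]
      · rw [Set.indicator_of_notMem (by simpa [Metric.mem_closedBall, dist_zero_right] using hz),
          hF_def, Set.indicator_of_notMem (by simpa using hz)]
    have hball : ∫ z in Metric.closedBall (0 : EuclideanSpace ℝ ι) (Real.sqrt t),
        gaussianPdf (1 : Matrix ι ι ℝ) (e z) = ∫ z : EuclideanSpace ℝ ι, F ‖z‖ := by
      rw [← MeasureTheory.integral_indicator (measurableSet_closedBall)]
      exact integral_congr_ae (ae_of_all _ hFz)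
    have hpolar := MeasureTheory.integral_fun_norm_addHaar
      (volume : Measure (EuclideanSpace ℝ ι)) F
    rw [finrank_euclideanSpace] at hpolar
    -- compute the radial integral
    have hind : (fun r : ℝ => r ^ (n - 1) • F r) =
        (Iic (Real.sqrt t)).indicator
          (fun r => r ^ (n - 1) * (c * Real.exp (-(r^2) / 2))) := by
      funext r
      by_cases hr : r ∈ Iic (Real.sqrt t)
      · rw [hF_def, Set.indicator_of_mem hr, Set.indicator_of_mem hr, smul_eq_mul]
      · rw [hF_def, Set.indicator_of_notMem hr, Set.indicator_of_notMem hr, smul_zero]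
    have hrad : ∫ r in Ioi (0:ℝ), r ^ (n - 1) • F r
        = ∫ r in Ioc 0 (Real.sqrt t), r ^ (n - 1) * (c * Real.exp (-(r^2) / 2)) := by
      rw [hind, MeasureTheory.integral_indicator measurableSet_Iic,
        Measure.restrict_restrict measurableSet_Iic, Set.Iic_inter_Ioi]
    -- volume of the unit ball
    have hΓpos : (0:ℝ) < Real.Gamma ((n : ℝ)/2 + 1) := Real.Gamma_pos_of_pos (by positivity)
    have hV : (volume (Metric.ball (0 : EuclideanSpace ℝ ι) 1)).toReal
        = Real.sqrt π ^ n / Real.Gamma ((n : ℝ)/2 + 1) := by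
      rw [EuclideanSpace.volume_ball]
      rw [ENNReal.ofReal_one, one_pow, one_mul,
        ENNReal.toReal_ofReal (by positivity)]
    -- assemble the left-hand side
    have hLHS : ∫ x in {x : ι → ℝ | x ⬝ᵥ x ≤ t}, gaussianPdf (1 : Matrix ι ι ℝ) x
        = (n : ℝ) * (Real.sqrt π ^ n / Real.Gamma ((n : ℝ)/2 + 1)) *
            ∫ r in Ioc 0 (Real.sqrt t), r ^ (n - 1) * (c * Real.exp (-(r^2) / 2)) := by
      rw [hset, hball, hpolar, measureReal_def, hV, hrad, nsmul_eq_mul, smul_eq_mul, mul_assoc]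
    rw [hLHS]
    -- right-hand side
    have hmeasG : Measurable (gammaPDFReal ((n : ℝ)/2) (1/2)) := measurable_gammaPDFReal _ _
    have hfin : ∫⁻ x in Ioc 0 t, gammaPDF ((n : ℝ)/2) (1/2) x ≠ ⊤ := by
      refine ne_of_lt (lt_of_le_of_lt (setLIntegral_le_lintegral _ _) ?_)
      rw [lintegral_gammaPDF_eq_one (by positivity : (0:ℝ) < (n : ℝ)/2)
        (by norm_num : (0:ℝ) < 1/2)]
      exact ENNReal.one_lt_top
    have hRHS : gammaMeasure ((n : ℝ)/2) (1/2) (Iic t)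
        = ∫⁻ x in Ioc 0 t, gammaPDF ((n : ℝ)/2) (1/2) x := by
      rw [gammaMeasure, withDensity_apply _ measurableSet_Iic,
        lintegral_Iic_eq_lintegral_Iio_add_Icc _ ht,
        lintegral_gammaPDF_of_nonpos (le_refl (0:ℝ)), zero_add,
        ← Measure.restrict_congr_set Ioc_ae_eq_Icc]
    have hRHS2 : ∫⁻ x in Ioc 0 t, gammaPDF ((n : ℝ)/2) (1/2) x
        = ENNReal.ofReal (∫ x in Ioc 0 t, gammaPDFReal ((n : ℝ)/2) (1/2) x) := by
      have heq : ∫ x in Ioc 0 t, gammaPDFReal ((n : ℝ)/2) (1/2) x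
          = (∫⁻ x in Ioc 0 t, gammaPDF ((n : ℝ)/2) (1/2) x).toReal := by
        rw [MeasureTheory.integral_eq_lintegral_of_nonneg_ae
          (ae_of_all _ fun x => gammaPDFReal_nonneg (by positivity) (by norm_num) x)
          hmeasG.aestronglyMeasurable]
        rfl
      rw [heq, ENNReal.ofReal_toReal hfin]
    rw [hRHS, hRHS2, chiSq_integral_eq hn ht]

end Main

/- ================= Main theorem ================= -/

open scoped MatrixOrder

/-- If the random matrix `X ∈ ℝ^{d×(T−1)}` satisfies
`vec(X) ~ N(0, Σ_T ⊗ Σ)`, then `tr(Σ⁻¹ X Σ_T⁻¹ Xᵀ)` follows the chi-square distribution with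
`(T−1)·d` degrees of freedom, i.e. the Gamma distribution with shape `(T−1)·d/2` and
rate `1/2`. -/
theorem bbscore_chiSquare {T d : ℕ} (hT : 2 ≤ T) (hd : 1 ≤ d)
    (hCovT : (bridgeCov T).PosDef)
    (Sig : Matrix (Fin d) (Fin d) ℝ) (hSig : Sig.PosDef)
    {Ω : Type*} [MeasurableSpace Ω] (P : Measure Ω) [IsProbabilityMeasure P]
    (X : Ω → Matrix (Fin d) (Fin (T - 1)) ℝ)
    (hX : P.map (fun ω => _root_.vec (X ω)) = multivariateGaussian (bridgeCov T ⊗ₖ Sig)) :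
    P.map (fun ω => Matrix.trace (Sig⁻¹ * X ω * (bridgeCov T)⁻¹ * (X ω)ᵀ)) =
      gammaMeasure (((T : ℝ) - 1) * (d : ℝ) / 2) (1 / 2) := by
  haveI hne1 : Nonempty (Fin (T - 1)) := ⟨⟨0, by omega⟩⟩
  haveI hne2 : Nonempty (Fin d) := ⟨⟨0, by omega⟩⟩
  set B := bridgeCov T with hB_def
  set S : Matrix (Fin (T - 1) × Fin d) (Fin (T - 1) × Fin d) ℝ :=
    CFC.sqrt B ⊗ₖ CFC.sqrt Sig with hS_def
  have hSB : (CFC.sqrt B)ᵀ = CFC.sqrt B :=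
    isHermitian_real_transpose_eq (CFC.sqrt_nonneg B).isSelfAdjoint
  have hSSg : (CFC.sqrt Sig)ᵀ = CFC.sqrt Sig :=
    isHermitian_real_transpose_eq (CFC.sqrt_nonneg Sig).isSelfAdjoint
  have hSherm : Sᵀ = S := by
    rw [hS_def, ← Matrix.kroneckerMap_transpose, hSB, hSSg]
  have hSS_mul : S * S = B ⊗ₖ Sig := by
    rw [hS_def, ← Matrix.mul_kronecker_mul, CFC.sqrt_mul_sqrt_self B hCovT.posSemidef.nonneg,
      CFC.sqrt_mul_sqrt_self Sig hSig.posSemidef.nonneg]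
  have hdetB : (CFC.sqrt B).det ≠ 0 := by
    intro h0
    have hpos := hCovT.det_pos
    have h2 : (CFC.sqrt B * CFC.sqrt B).det = 0 := by
      rw [Matrix.det_mul, h0, mul_zero]
    rw [CFC.sqrt_mul_sqrt_self B hCovT.posSemidef.nonneg] at h2
    exact absurd h2 (ne_of_gt hpos)
  have hdetSg : (CFC.sqrt Sig).det ≠ 0 := by
    intro h0
    have hpos := hSig.det_pos
    have h2 : (CFC.sqrt Sig * CFC.sqrt Sig).det = 0 := by
      rw [Matrix.det_mul, h0, mul_zero]
    rw [CFC.sqrt_mul_sqrt_self Sig hSig.posSemidef.nonneg] at h2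
    exact absurd h2 (ne_of_gt hpos)
  have hdet : S.det ≠ 0 := by
    rw [hS_def, Matrix.det_kronecker]
    exact mul_ne_zero (pow_ne_zero _ hdetB) (pow_ne_zero _ hdetSg)
  have hdetC : 0 < (B ⊗ₖ Sig).det := by
    rw [← hSS_mul, Matrix.det_mul]
    exact mul_self_pos.mpr hdet
  have hvec : AEMeasurable (fun ω => _root_.vec (X ω)) P := by
    by_contra h
    rw [Measure.map_of_not_aemeasurable h] at hX
    exact multivariateGaussian_ne_zero hdetC hX.symm
  have hBinv : ∀ i j, (B⁻¹) i j = (B⁻¹) j i := by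
    intro i j
    have h := hCovT.1.inv
    simpa using (congrFun (congrFun h i) j).symm
  have htr : ∀ Y : Matrix (Fin d) (Fin (T - 1)) ℝ,
      Matrix.trace (Sig⁻¹ * Y * B⁻¹ * Yᵀ) =
        (_root_.vec Y) ⬝ᵥ ((B ⊗ₖ Sig)⁻¹).mulVec (_root_.vec Y) := by
    intro Y
    rw [Matrix.inv_kronecker]
    simp only [Matrix.trace, Matrix.diag, Matrix.mul_apply, Matrix.transpose_apply, dotProduct,
      Matrix.mulVec, Matrix.kroneckerMap_apply, _root_.vec, Fintype.sum_prod_type, Finset.sum_mul,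
      Finset.mul_sum]
    rw [Finset.sum_comm]
    refine Finset.sum_congr rfl fun k _ => Finset.sum_congr rfl fun a _ =>
      Finset.sum_congr rfl fun m _ => Finset.sum_congr rfl fun b _ => ?_
    rw [hBinv m k]
    ring
  have hcomp : (fun ω => Matrix.trace (Sig⁻¹ * X ω * B⁻¹ * (X ω)ᵀ))
      = (fun v : Fin (T - 1) × Fin d → ℝ => v ⬝ᵥ ((B ⊗ₖ Sig)⁻¹).mulVec v) ∘
          (fun ω => _root_.vec (X ω)) :=
    funext fun ω => htr (X ω)
  rw [hcomp, ← AEMeasurable.map_map_of_aemeasurable ((measurable_dot _).aemeasurable) hvec, hX]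
  rw [show B ⊗ₖ Sig = S * S from hSS_mul.symm]
  rw [multivariateGaussian_map_quadForm S hSherm hdet, multivariateGaussian_one_map_dot_self]
  congr 1
  rw [Fintype.card_prod, Fintype.card_fin, Fintype.card_fin]
  push_cast [Nat.cast_sub (show 1 ≤ T by omega)]
  ring
end
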